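/- Let u and v = λ(x)u be quasi-definite moment functionals on Π^d, where λ(x) = a_2·𝕏_2 + a_1·𝕏_1 + a_0 has exact total degree 2 (a_2 ≠ 0), and let the monic OPS {ℙ_n} of u and {ℚ_n} of v be related by ℙ_n = ℚ_n + M_n ℚ_{n−1} + N_n ℚ_{n−2}. Then for every n ≥ 2 one has N_n Ĥ_{n−2} = H_n A_{n−2,2}^t, where Ĥ_m = ⟨v, ℚ_m ℚ_m^t⟩; consequently N_n has full rank r_{n−2}^d for all n ≥ 2, and in particular N_2 = H_2 a_2^t Ĥ_0^{−1}. -/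

import Mathlib

open MvPolynomial Matrix

/-- The index set for monomials of total degree `n` in `d` variables:
multi-indices (exponent tuples) summing to `n`. Its cardinality is `r_n^d = C(n+d-1,n)`. -/
abbrev Idx (d n : ℕ) : Type := {ν : Fin d → ℕ // ν ∈ Finset.Nat.antidiagonalTuple d n}

/-- The monomial `x^ν` associated with a multi-index `ν` of total degree `n`;
the family `fun α : Idx d n => monIdx α` is the canonical vector `𝕏_n`. -/
noncomputable def monIdx {d n : ℕ} (α : Idx d n) : MvPolynomial (Fin d) ℝ :=
  MvPolynomial.monomial (Finsupp.equivFunOnFinite.symm α.1) 1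

/-- A polynomial system (PS): a sequence of vectors `ℙ_n` of size `r_n^d` whose
entries are polynomials of total degree `n`, the entries of `ℙ_0,…,ℙ_n` forming a
basis of the polynomials of total degree at most `n`. -/
structure PolySystem (d : ℕ) where
  vec : (n : ℕ) → Idx d n → MvPolynomial (Fin d) ℝ
  degree_eq : ∀ n α, (vec n α).totalDegree = n
  indep : LinearIndependent ℝ (fun p : (Σ n : ℕ, Idx d n) => vec p.1 p.2)
  spans : ∀ (n : ℕ) (p : MvPolynomial (Fin d) ℝ), p.totalDegree ≤ n →
    p ∈ Submodule.span ℝ {q | ∃ m ≤ n, ∃ α : Idx d m, q = vec m α}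

/-- `{ℙ_n}` is an orthogonal polynomial system (OPS) with respect to the moment
functional `u` : `⟨u, 𝕏_m ℙ_n^t⟩ = 0` for `m < n` and `⟨u, 𝕏_n ℙ_n^t⟩` nonsingular. -/
def IsOPS {d : ℕ} (u : MvPolynomial (Fin d) ℝ →ₗ[ℝ] ℝ) (P : PolySystem d) : Prop :=
  (∀ m n : ℕ, m < n → ∀ (α : Idx d m) (β : Idx d n), u (monIdx α * P.vec n β) = 0) ∧
  (∀ n : ℕ, IsUnit (Matrix.of fun α β : Idx d n => u (monIdx α * P.vec n β)).det)

/-- `u` is quasi-definite iff it admits an OPS. -/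
def QuasiDefinite {d : ℕ} (u : MvPolynomial (Fin d) ℝ →ₗ[ℝ] ℝ) : Prop :=
  ∃ P : PolySystem d, IsOPS u P

/-- `H_n = ⟨u, ℙ_n ℙ_n^t⟩`. -/
noncomputable def Hmat {d : ℕ} (u : MvPolynomial (Fin d) ℝ →ₗ[ℝ] ℝ) (P : PolySystem d)
    (n : ℕ) : Matrix (Idx d n) (Idx d n) ℝ :=
  Matrix.of fun α β => u (P.vec n α * P.vec n β)

/-- `P_m(u;x,y) = ℙ_m(x)^t H_m⁻¹ ℙ_m(y)`. -/
noncomputable def kerP {d : ℕ} (u : MvPolynomial (Fin d) ℝ →ₗ[ℝ] ℝ) (P : PolySystem d)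
    (m : ℕ) (x y : Fin d → ℝ) : ℝ :=
  ∑ α, ∑ β, eval x (P.vec m α) * (Hmat u P m)⁻¹ α β * eval y (P.vec m β)

/-- `kerLT u P n = K_{n-1}(u;·,·) = Σ_{m<n} P_m(u;·,·)`, so that `kerLT u P 0 = K_{-1} = 0`. -/
noncomputable def kerLT {d : ℕ} (u : MvPolynomial (Fin d) ℝ →ₗ[ℝ] ℝ) (P : PolySystem d)
    (n : ℕ) (x y : Fin d → ℝ) : ℝ :=
  ∑ m ∈ Finset.range n, kerP u P m x y

/-- `𝖯_n(ξ) = (ℙ_n(ξ_1)|⋯|ℙ_n(ξ_N))`. -/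
noncomputable def Pmat {d N : ℕ} (P : PolySystem d) (ξ : Fin N → (Fin d → ℝ)) (n : ℕ) :
    Matrix (Idx d n) (Fin N) ℝ :=
  Matrix.of fun α i => eval (ξ i) (P.vec n α)

/-- `Kmat u P ξ n = 𝒦_{n-1} = (K_{n-1}(u;ξ_i,ξ_j))_{i,j}`, with `𝒦_{-1} = 0`. -/
noncomputable def Kmat {d N : ℕ} (u : MvPolynomial (Fin d) ℝ →ₗ[ℝ] ℝ) (P : PolySystem d)
    (ξ : Fin N → (Fin d → ℝ)) (n : ℕ) : Matrix (Fin N) (Fin N) ℝ :=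
  Matrix.of fun i j => kerLT u P n (ξ i) (ξ j)

/-- `Kvec u P ξ n x = 𝖪_{n-1}(ξ,x) = (K_{n-1}(u;ξ_1,x),…,K_{n-1}(u;ξ_N,x))^t`, with `𝖪_{-1}=0`. -/
noncomputable def Kvec {d N : ℕ} (u : MvPolynomial (Fin d) ℝ →ₗ[ℝ] ℝ) (P : PolySystem d)
    (ξ : Fin N → (Fin d → ℝ)) (n : ℕ) (x : Fin d → ℝ) : Fin N → ℝ :=
  fun i => kerLT u P n (ξ i) x

/-- A PS is monic if the degree-`n` homogeneous part of the entry of `ℙ_n` indexed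
by `α` is exactly the monomial `x^α`. -/
def PolySystem.IsMonic {d : ℕ} (P : PolySystem d) : Prop :=
  ∀ (n : ℕ) (α : Idx d n) (ν : Fin d →₀ ℕ), (ν.sum fun _ e => e) = n →
    MvPolynomial.coeff ν (P.vec n α) = if ν = Finsupp.equivFunOnFinite.symm α.1 then 1 else 0

/-- Multiplication of a real matrix times a vector of polynomials. -/
noncomputable def matVec {d : ℕ} {a b : Type} [Fintype b] (M : Matrix a b ℝ)
    (w : b → MvPolynomial (Fin d) ℝ) (i : a) : MvPolynomial (Fin d) ℝ :=
  ∑ j, M i j • w j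

/-- The matrix `L_{n,i}` determined by `x_i 𝕏_n = L_{n,i} 𝕏_{n+1}`. -/
noncomputable def Lmat (d n : ℕ) (i : Fin d) : Matrix (Idx d n) (Idx d (n + 1)) ℝ :=
  Matrix.of fun α β => if β.1 = (fun j => α.1 j + if j = i then 1 else 0) then 1 else 0

/-- The unique multi-index of degree 0. -/
def zeroIdx {d : ℕ} : Idx d 0 :=
  ⟨fun _ => 0, by simp [Finset.Nat.mem_antidiagonalTuple]⟩

/-- The degree-2 multi-index `e_i + e_j`. -/
def e2 {d : ℕ} (i j : Fin d) : Idx d 2 :=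
  ⟨fun k => (if k = i then 1 else 0) + (if k = j then 1 else 0), by
    simp [Finset.Nat.mem_antidiagonalTuple, Finset.sum_add_distrib]⟩

/-- `A_{h,2} = Σ_{1≤i≤j≤d} a^{(2)}_{ij} L_{h,j} L_{h+1,i}`. -/
noncomputable def Amat2 {d : ℕ} (a2 : Idx d 2 → ℝ) (h : ℕ) :
    Matrix (Idx d h) (Idx d (h + 2)) ℝ :=
  ∑ i : Fin d, ∑ j : Fin d,
    if i ≤ j then a2 (e2 i j) • (Lmat d h j * Lmat d (h + 1) i) else 0

/-- The polynomial `λ(x) = a_2·𝕏_2 + a_1·𝕏_1 + a_0`. -/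
noncomputable def lamPoly {d : ℕ} (a2 : Idx d 2 → ℝ) (a1 : Idx d 1 → ℝ) (a0 : ℝ) :
    MvPolynomial (Fin d) ℝ :=
  (∑ α : Idx d 2, a2 α • monIdx α) + (∑ α : Idx d 1, a1 α • monIdx α) + MvPolynomial.C a0

section Helpers
open MvPolynomial

variable {d : ℕ}

lemma finsupp_sum_eq (ν : Fin d →₀ ℕ) : (ν.sum fun _ e => e) = ∑ i, ν i :=
  Finsupp.sum_fintype _ _ (fun _ => rfl)

lemma mem_idx {m : ℕ} {ν : Fin d → ℕ} (h : ∑ i, ν i = m) :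
    ν ∈ Finset.Nat.antidiagonalTuple d m := by
  simpa [Finset.Nat.mem_antidiagonalTuple] using h

/-- The finsupp associated with an index. -/
noncomputable def idxF {n : ℕ} (γ : Idx d n) : Fin d →₀ ℕ :=
  Finsupp.equivFunOnFinite.symm γ.1

lemma idxF_apply {n : ℕ} (γ : Idx d n) (k : Fin d) : idxF γ k = γ.1 k := rfl

lemma idxF_sum {n : ℕ} (γ : Idx d n) : ∑ i, idxF γ i = n := by
  have := γ.2
  rw [Finset.Nat.mem_antidiagonalTuple] at this
  simpa [idxF_apply] using this

lemma idxF_inj {n : ℕ} {γ δ : Idx d n} (h : idxF γ = idxF δ) : γ = δ := by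
  apply Subtype.ext
  have := congrArg (fun f : Fin d →₀ ℕ => (f : Fin d → ℕ)) h
  funext k
  exact congrFun this k

lemma monIdx_eq {n : ℕ} (γ : Idx d n) : monIdx γ = MvPolynomial.monomial (idxF γ) 1 := rfl

lemma coeff_monIdx {n : ℕ} (ν : Fin d →₀ ℕ) (γ : Idx d n) :
    MvPolynomial.coeff ν (monIdx γ) = if ν = idxF γ then 1 else 0 := by
  classical
  rw [monIdx_eq, MvPolynomial.coeff_monomial]
  simp [eq_comm]

lemma coeff_zero_of_deg {p : MvPolynomial (Fin d) ℝ} {m : ℕ} (hp : p.totalDegree ≤ m)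
    {ν : Fin d →₀ ℕ} (hν : m < ∑ i, ν i) : MvPolynomial.coeff ν p = 0 := by
  by_contra h
  have h2 := MvPolynomial.le_totalDegree (p := p) (s := ν) (MvPolynomial.mem_support_iff.mpr h)
  rw [finsupp_sum_eq] at h2
  omega

lemma orth_low {u : MvPolynomial (Fin d) ℝ →ₗ[ℝ] ℝ} {P : PolySystem d} (hP : IsOPS u P)
    (n : ℕ) (β : Idx d n) {q : MvPolynomial (Fin d) ℝ}
    (hq : ∀ ν : Fin d →₀ ℕ, n ≤ ∑ i, ν i → MvPolynomial.coeff ν q = 0) :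
    u (q * P.vec n β) = 0 := by
  conv_lhs => rw [q.as_sum]
  rw [Finset.sum_mul, map_sum]
  apply Finset.sum_eq_zero
  intro ν hν
  have hlt : ∑ i, ν i < n := by
    by_contra h
    exact (MvPolynomial.mem_support_iff.mp hν) (hq ν (le_of_not_gt h))
  have hmem : (fun i => ν i) ∈ Finset.Nat.antidiagonalTuple d (∑ i, ν i) := mem_idx rfl
  have hmon : (MvPolynomial.monomial ν) (MvPolynomial.coeff ν q)
      = MvPolynomial.coeff ν q • monIdx (⟨fun i => ν i, hmem⟩ : Idx d (∑ i, ν i)) := by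
    have hcoe : Finsupp.equivFunOnFinite.symm ((⟨fun i => ν i, hmem⟩ : Idx d (∑ i, ν i)) : Idx d (∑ i, ν i)).1 = ν := by
      apply Finsupp.ext; intro k; rfl
    rw [monIdx, hcoe, MvPolynomial.smul_monomial, smul_eq_mul, mul_one]
  rw [hmon, smul_mul_assoc, u.map_smul, hP.1 _ n hlt _ β, smul_zero]

lemma coeff_mul_bound {p q : MvPolynomial (Fin d) ℝ} {a b : ℕ}
    (hp : ∀ μ : Fin d →₀ ℕ, a ≤ ∑ i, μ i → MvPolynomial.coeff μ p = 0)
    (hq : ∀ σ : Fin d →₀ ℕ, b ≤ ∑ i, σ i → MvPolynomial.coeff σ q = 0)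
    {ν : Fin d →₀ ℕ} (hν : a + b - 1 ≤ ∑ i, ν i) : MvPolynomial.coeff ν (p * q) = 0 := by
  classical
  rw [MvPolynomial.coeff_mul]
  apply Finset.sum_eq_zero
  rintro ⟨μ, σ⟩ hmem
  rw [Finset.HasAntidiagonal.mem_antidiagonal] at hmem
  have hsum : ∑ i, μ i + ∑ i, σ i = ∑ i, ν i := by
    rw [← Finset.sum_add_distrib]
    exact Finset.sum_congr rfl fun i _ => by rw [← hmem]; rfl
  rcases le_or_gt a (∑ i, μ i) with h | h
  · simp [hp _ h]
  · have hb : b ≤ ∑ i, σ i := by omega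
    simp [hq _ hb]

lemma monic_diff_coeff {P : PolySystem d} (hm : P.IsMonic) (n : ℕ) (γ : Idx d n)
    (ν : Fin d →₀ ℕ) (hν : n ≤ ∑ i, ν i) :
    MvPolynomial.coeff ν (P.vec n γ - monIdx γ) = 0 := by
  classical
  rw [MvPolynomial.coeff_sub, coeff_monIdx]
  rcases eq_or_lt_of_le hν with h | h
  · rw [hm n γ ν (by rw [finsupp_sum_eq]; omega)]
    unfold idxF
    split_ifs <;> ring
  · rw [coeff_zero_of_deg (le_of_eq (P.degree_eq n γ)) h]
    rw [if_neg, sub_zero]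
    intro hc
    rw [hc, idxF_sum] at h
    omega
end Helpers
section Helpers2
open MvPolynomial

variable {d : ℕ}

lemma e2_inj {i j k l : Fin d} (hij : i ≤ j) (hkl : k ≤ l) (h : e2 i j = e2 k l) :
    i = k ∧ j = l := by
  have hf : ∀ m : Fin d, ((if m = i then 1 else 0) + (if m = j then 1 else 0) : ℕ)
      = (if m = k then 1 else 0) + (if m = l then 1 else 0) := by
    intro m
    exact congrFun (congrArg Subtype.val h) m
  by_cases h1 : i = k
  · subst h1
    refine ⟨rfl, ?_⟩
    by_cases hjl : j = l
    · exact hjl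
    · exfalso
      have hj := hf j
      rw [if_pos rfl, if_neg hjl] at hj
      have hl := hf l
      rw [if_pos rfl, if_neg (Ne.symm hjl)] at hl
      split_ifs at hj hl <;> omega
  · exfalso
    have hi := hf i
    rw [if_pos rfl, if_neg h1] at hi
    have hil : i = l := by
      by_contra hc
      rw [if_neg hc] at hi
      split_ifs at hi <;> omega
    have hkj : k = j := by
      have hk := hf k
      rw [if_pos rfl, if_neg (fun hc => h1 hc.symm)] at hk
      by_contra hc
      rw [if_neg hc] at hk
      split_ifs at hk <;> omega
    apply h1
    have h2 : i ≤ k := by rw [hkj]; exact hij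
    have h3 : k ≤ i := by rw [hil]; exact hkl
    exact le_antisymm h2 h3

lemma e2_surj (δ : Idx d 2) : ∃ i j : Fin d, i ≤ j ∧ e2 i j = δ := by
  classical
  obtain ⟨ν, hν⟩ := δ
  have hs : ∑ i, ν i = 2 := by
    rw [Finset.Nat.mem_antidiagonalTuple] at hν
    exact hν
  obtain ⟨i, hi⟩ : ∃ i, ν i ≠ 0 := by
    by_contra hc
    push_neg at hc
    simp [hc] at hs
  have hle : ν i ≤ 2 := hs ▸ Finset.single_le_sum (fun _ _ => Nat.zero_le _) (Finset.mem_univ i)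
  have herase : ν i + ∑ k ∈ Finset.univ.erase i, ν k = 2 := by
    rw [Finset.add_sum_erase _ _ (Finset.mem_univ i)]
    exact hs
  rcases Nat.lt_or_ge (ν i) 2 with h1 | h2
  · -- ν i = 1
    have hνi : ν i = 1 := by omega
    have hrest : ∑ k ∈ Finset.univ.erase i, ν k = 1 := by omega
    obtain ⟨j, hjmem, hj⟩ : ∃ j ∈ Finset.univ.erase i, ν j ≠ 0 := by
      by_contra hc
      push_neg at hc
      rw [Finset.sum_eq_zero hc] at hrest
      omega
    have hji : j ≠ i := (Finset.mem_erase.mp hjmem).1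
    have hjle : ν j ≤ 1 := hrest ▸ Finset.single_le_sum (fun _ _ => Nat.zero_le _) hjmem
    have hνj : ν j = 1 := by omega
    have hzero : ∀ k, k ≠ i → k ≠ j → ν k = 0 := by
      intro k hki hkj
      by_contra hc
      have hkmem : k ∈ (Finset.univ.erase i).erase j := by
        simp [hki, hkj]
      have : ν j + ∑ m ∈ (Finset.univ.erase i).erase j, ν m = 1 := by
        rw [Finset.add_sum_erase _ _ hjmem]; exact hrest
      have hk1 : 1 ≤ ν k := Nat.one_le_iff_ne_zero.mpr hc
      have := Finset.single_le_sum (f := ν) (fun _ _ => Nat.zero_le _) hkmem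
      omega
    have hval : ν = fun k => (if k = i then 1 else 0) + (if k = j then 1 else 0) := by
      funext k
      by_cases hk1 : k = i
      · subst hk1; rw [if_pos rfl, if_neg (fun hc => hji hc.symm)]
        omega
      · by_cases hk2 : k = j
        · subst hk2; rw [if_neg hk1, if_pos rfl]
          omega
        · rw [if_neg hk1, if_neg hk2, hzero k hk1 hk2]
    rcases le_total i j with hij | hij
    · exact ⟨i, j, hij, Subtype.ext hval.symm⟩
    · refine ⟨j, i, hij, Subtype.ext ?_⟩
      funext k
      show ((if k = j then 1 else 0) + (if k = i then 1 else 0) : ℕ) = ν k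
      rw [hval]
      beta_reduce
      split_ifs <;> omega
  · -- ν i = 2
    have hνi : ν i = 2 := by omega
    refine ⟨i, i, le_refl i, Subtype.ext ?_⟩
    funext k
    show ((if k = i then 1 else 0) + (if k = i then 1 else 0) : ℕ) = ν k
    by_cases hk : k = i
    · subst hk; simp [hνi]
    · rw [if_neg hk]
      have : ∑ m ∈ Finset.univ.erase i, ν m = 0 := by omega
      have hz := (Finset.sum_eq_zero_iff).mp this k (by simp [hk])
      simp [hz]
end Helpers2
section Helpers3
open MvPolynomial

variable {d : ℕ}

lemma sum_e2' {M : Type*} [AddCommMonoid M] (F : Idx d 2 → M) :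
    (∑ i : Fin d, ∑ j : Fin d, if i ≤ j then F (e2 i j) else 0) = ∑ δ : Idx d 2, F δ := by
  classical
  rw [← Finset.sum_product']
  rw [← Finset.sum_filter]
  refine Finset.sum_bij (fun p _ => e2 p.1 p.2) (fun _ _ => Finset.mem_univ _) ?_ ?_ ?_
  · rintro ⟨i, j⟩ hij ⟨k, l⟩ hkl h
    rw [Finset.mem_filter] at hij hkl
    obtain ⟨h1, h2⟩ := e2_inj hij.2 hkl.2 h
    exact Prod.ext h1 h2
  · intro δ _
    obtain ⟨i, j, hij, he⟩ := e2_surj δ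
    exact ⟨(i, j), Finset.mem_filter.mpr ⟨Finset.mem_univ _, hij⟩, he⟩
  · intros; rfl

/-- Sum of two indices. -/
def addIdx {m n : ℕ} (γ : Idx d m) (α : Idx d n) : Idx d (m + n) :=
  ⟨fun k => γ.1 k + α.1 k, by
    rw [Finset.Nat.mem_antidiagonalTuple, Finset.sum_add_distrib]
    have h1 := γ.2
    have h2 := α.2
    rw [Finset.Nat.mem_antidiagonalTuple] at h1 h2
    omega⟩

lemma monIdx_addIdx {m n : ℕ} (γ : Idx d m) (α : Idx d n) :
    monIdx (addIdx γ α) = monIdx γ * monIdx α := by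
  rw [monIdx_eq, monIdx_eq, monIdx_eq, MvPolynomial.monomial_mul, mul_one]
  have hF : idxF (addIdx γ α) = idxF γ + idxF α := by
    apply Finsupp.ext; intro k; rfl
  rw [hF]

lemma Lmat_mul_apply {h : ℕ} (i j : Fin d) (γ : Idx d h) (δ : Idx d (h + 2)) :
    (Lmat d h j * Lmat d (h + 1) i) γ δ = if δ = addIdx γ (e2 i j) then 1 else 0 := by
  classical
  rw [Matrix.mul_apply]
  have hmem : (fun k => γ.1 k + if k = j then 1 else 0) ∈ Finset.Nat.antidiagonalTuple d (h + 1) := by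
    rw [Finset.Nat.mem_antidiagonalTuple, Finset.sum_add_distrib]
    have h1 := γ.2
    rw [Finset.Nat.mem_antidiagonalTuple] at h1
    rw [Finset.sum_ite_eq' Finset.univ j (fun _ => 1)]
    simp [h1]
  set μ0 : Idx d (h + 1) := ⟨fun k => γ.1 k + if k = j then 1 else 0, hmem⟩ with hμ0
  rw [Finset.sum_eq_single μ0]
  · show (if μ0.1 = _ then (1 : ℝ) else 0) * (if δ.1 = _ then (1 : ℝ) else 0) = _
    rw [if_pos rfl, one_mul]
    have hcond : (δ.1 = fun k => μ0.1 k + if k = i then 1 else 0) ↔ δ = addIdx γ (e2 i j) := by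
      rw [Subtype.ext_iff]
      have hfun : (fun k => μ0.1 k + if k = i then 1 else 0) = (addIdx γ (e2 i j)).1 := by
        funext k
        show γ.1 k + (if k = j then 1 else 0) + (if k = i then 1 else 0)
            = γ.1 k + ((if k = i then 1 else 0) + (if k = j then 1 else 0))
        omega
      rw [hfun]
    split_ifs with hA hB hB
    · rfl
    · exact absurd (hcond.mp hA) hB
    · exact absurd (hcond.mpr hB) hA
    · rfl
  · intro μ _ hμ
    have : ¬(μ.1 = fun k => γ.1 k + if k = j then 1 else 0) := by
      intro hc
      exact hμ (Subtype.ext hc)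
    show (if μ.1 = _ then (1 : ℝ) else 0) * _ = 0
    rw [if_neg this, zero_mul]
  · intro hc
    exact absurd (Finset.mem_univ μ0) hc

lemma Amat2_apply (a2 : Idx d 2 → ℝ) (h : ℕ) (γ : Idx d h) (δ : Idx d (h + 2)) :
    Amat2 a2 h γ δ = ∑ i : Fin d, ∑ j : Fin d,
      if i ≤ j ∧ δ = addIdx γ (e2 i j) then a2 (e2 i j) else 0 := by
  classical
  rw [Amat2]
  rw [Matrix.sum_apply]
  refine Finset.sum_congr rfl fun i _ => ?_
  rw [Matrix.sum_apply]
  refine Finset.sum_congr rfl fun j _ => ?_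
  by_cases hij : i ≤ j
  · rw [if_pos hij, Matrix.smul_apply, Lmat_mul_apply, smul_eq_mul]
    by_cases hδ : δ = addIdx γ (e2 i j)
    · rw [if_pos hδ, if_pos ⟨hij, hδ⟩, mul_one]
    · rw [if_neg hδ, if_neg (fun hc => hδ hc.2), mul_zero]
  · rw [if_neg hij, if_neg (fun hc => hij hc.1)]
    rfl

lemma lam2mul (a2 : Idx d 2 → ℝ) (n : ℕ) (γ : Idx d n) :
    (∑ α : Idx d 2, a2 α • monIdx α) * monIdx γ
      = ∑ δ : Idx d (n + 2), Amat2 a2 n γ δ • monIdx δ := by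
  classical
  rw [Finset.sum_mul]
  have hrhs : ∑ δ : Idx d (n + 2), Amat2 a2 n γ δ • monIdx δ
      = ∑ α : Idx d 2, a2 α • monIdx (addIdx γ α) := by
    calc ∑ δ : Idx d (n + 2), Amat2 a2 n γ δ • monIdx δ
        = ∑ δ : Idx d (n + 2), ∑ i : Fin d, ∑ j : Fin d,
            (if i ≤ j ∧ δ = addIdx γ (e2 i j) then a2 (e2 i j) else 0) • monIdx δ := by
          refine Finset.sum_congr rfl fun δ _ => ?_
          rw [Amat2_apply, Finset.sum_smul]
          exact Finset.sum_congr rfl fun i _ => by rw [Finset.sum_smul]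
      _ = ∑ i : Fin d, ∑ j : Fin d, ∑ δ : Idx d (n + 2),
            (if i ≤ j ∧ δ = addIdx γ (e2 i j) then a2 (e2 i j) else 0) • monIdx δ := by
          rw [Finset.sum_comm]
          exact Finset.sum_congr rfl fun i _ => Finset.sum_comm
      _ = ∑ i : Fin d, ∑ j : Fin d,
            if i ≤ j then a2 (e2 i j) • monIdx (addIdx γ (e2 i j)) else 0 := by
          refine Finset.sum_congr rfl fun i _ => Finset.sum_congr rfl fun j _ => ?_
          by_cases hij : i ≤ j
          · rw [if_pos hij]
            rw [Finset.sum_eq_single (addIdx γ (e2 i j))]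
            · rw [if_pos ⟨hij, rfl⟩]
            · intro δ _ hδ
              rw [if_neg (fun hc => hδ hc.2), zero_smul]
            · intro hc
              exact absurd (Finset.mem_univ _) hc
          · rw [if_neg hij]
            apply Finset.sum_eq_zero
            intro δ _
            rw [if_neg (fun hc => hij hc.1), zero_smul]
      _ = ∑ α : Idx d 2, a2 α • monIdx (addIdx γ α) :=
          sum_e2' (fun α => a2 α • monIdx (addIdx γ α))
  rw [hrhs]
  refine Finset.sum_congr rfl fun α _ => ?_
  rw [smul_mul_assoc, monIdx_addIdx, mul_comm]

lemma coeff_sum_monIdx {m : ℕ} (c : Idx d m → ℝ) (γ0 : Idx d m) :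
    MvPolynomial.coeff (idxF γ0) (∑ γ : Idx d m, c γ • monIdx γ) = c γ0 := by
  classical
  rw [MvPolynomial.coeff_sum]
  rw [Finset.sum_eq_single γ0]
  · rw [MvPolynomial.coeff_smul, coeff_monIdx, if_pos rfl, smul_eq_mul, mul_one]
  · intro γ _ hγ
    rw [MvPolynomial.coeff_smul, coeff_monIdx, if_neg, smul_zero]
    intro hc
    exact hγ (idxF_inj hc.symm)
  · intro hc
    exact absurd (Finset.mem_univ _) hc

lemma coeff_csum_zero {m : ℕ} (c : Idx d m → ℝ) {μ : Fin d →₀ ℕ} (hμ : m < ∑ i, μ i) :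
    MvPolynomial.coeff μ (∑ α : Idx d m, c α • monIdx α) = 0 := by
  classical
  rw [MvPolynomial.coeff_sum]
  apply Finset.sum_eq_zero
  intro α _
  rw [MvPolynomial.coeff_smul, coeff_monIdx, if_neg, smul_zero]
  intro hc
  rw [hc, idxF_sum] at hμ
  omega
end Helpers3
section Helpers4
open MvPolynomial

variable {d : ℕ} {u : MvPolynomial (Fin d) ℝ →ₗ[ℝ] ℝ} {P : PolySystem d}

lemma vec_coeff_zero (P : PolySystem d) {m n : ℕ} (h : m < n) (γ : Idx d m) :
    ∀ ν : Fin d →₀ ℕ, n ≤ ∑ i, ν i → MvPolynomial.coeff ν (P.vec m γ) = 0 := fun ν hν =>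
  coeff_zero_of_deg (le_of_eq (P.degree_eq m γ)) (by omega)

lemma ops_orth_vec (hP : IsOPS u P) {m n : ℕ} (h : m < n) (γ : Idx d m) (β : Idx d n) :
    u (P.vec n β * P.vec m γ) = 0 := by
  rw [mul_comm]
  exact orth_low hP n β (vec_coeff_zero P h γ)

lemma u_vec_mon (hP : IsOPS u P) (hm : P.IsMonic) (n : ℕ) (α δ : Idx d n) :
    u (P.vec n α * monIdx δ) = Hmat u P n α δ := by
  have h0 : u ((P.vec n δ - monIdx δ) * P.vec n α) = 0 :=
    orth_low hP n α (monic_diff_coeff hm n δ)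
  have hsplit : P.vec n α * monIdx δ
      = P.vec n α * P.vec n δ - (P.vec n δ - monIdx δ) * P.vec n α := by ring
  rw [hsplit, map_sub, h0, sub_zero]
  rfl

lemma Hmat_isUnit (hP : IsOPS u P) (hm : P.IsMonic) (n : ℕ) :
    IsUnit (Hmat u P n).det := by
  have heq : Hmat u P n = Matrix.of fun α β : Idx d n => u (monIdx α * P.vec n β) := by
    ext α β
    have h0 : u ((P.vec n α - monIdx α) * P.vec n β) = 0 :=
      orth_low hP n β (monic_diff_coeff hm n α)
    have hsplit : P.vec n α * P.vec n β
        = monIdx α * P.vec n β + (P.vec n α - monIdx α) * P.vec n β := by ring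
    show u (P.vec n α * P.vec n β) = u (monIdx α * P.vec n β)
    rw [hsplit, map_add, h0, add_zero]
  rw [heq]
  exact hP.2 n
end Helpers4
section Helpers5
open MvPolynomial

variable {d : ℕ}

lemma coeff_lam2_zero (a2 : Idx d 2 → ℝ) :
    ∀ μ : Fin d →₀ ℕ, 3 ≤ ∑ i, μ i →
      MvPolynomial.coeff μ (∑ α : Idx d 2, a2 α • monIdx α) = 0 := fun μ hμ =>
  coeff_csum_zero a2 (by omega)

lemma coeff_lam1_zero (a1 : Idx d 1 → ℝ) (a0 : ℝ) :
    ∀ μ : Fin d →₀ ℕ, 2 ≤ ∑ i, μ i →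
      MvPolynomial.coeff μ ((∑ α : Idx d 1, a1 α • monIdx α) + MvPolynomial.C a0) = 0 := by
  intro μ hμ
  classical
  rw [MvPolynomial.coeff_add, coeff_csum_zero a1 (by omega), MvPolynomial.coeff_C]
  rw [if_neg, add_zero]
  intro hc
  rw [← hc] at hμ
  simp at hμ

lemma rem_coeff (a2 : Idx d 2 → ℝ) (a1 : Idx d 1 → ℝ) (a0 : ℝ)
    {Q : PolySystem d} (hQm : Q.IsMonic) (n : ℕ) (γ : Idx d n) :
    ∀ ν : Fin d →₀ ℕ, n + 2 ≤ ∑ i, ν i →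
      MvPolynomial.coeff ν (lamPoly a2 a1 a0 * Q.vec n γ
        - ∑ δ : Idx d (n + 2), Amat2 a2 n γ δ • monIdx δ) = 0 := by
  intro ν hν
  rw [MvPolynomial.coeff_sub]
  have hsplit : lamPoly a2 a1 a0 * Q.vec n γ
      = (∑ α : Idx d 2, a2 α • monIdx α) * monIdx γ
        + ((∑ α : Idx d 2, a2 α • monIdx α) * (Q.vec n γ - monIdx γ)
          + ((∑ α : Idx d 1, a1 α • monIdx α) + MvPolynomial.C a0) * Q.vec n γ) := by
    rw [lamPoly]; ring
  rw [hsplit, MvPolynomial.coeff_add, MvPolynomial.coeff_add, lam2mul a2 n γ]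
  have h2 : MvPolynomial.coeff ν ((∑ α : Idx d 2, a2 α • monIdx α) * (Q.vec n γ - monIdx γ)) = 0 :=
    coeff_mul_bound (a := 3) (b := n) (coeff_lam2_zero a2) (monic_diff_coeff hQm n γ) (by omega)
  have h3 : MvPolynomial.coeff ν
      (((∑ α : Idx d 1, a1 α • monIdx α) + MvPolynomial.C a0) * Q.vec n γ) = 0 :=
    coeff_mul_bound (a := 2) (b := n + 1) (coeff_lam1_zero a1 a0)
      (fun σ hσ => coeff_zero_of_deg (le_of_eq (Q.degree_eq n γ)) (by omega)) (by omega)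
  rw [h2, h3]
  ring

lemma part1_lemma (u v : MvPolynomial (Fin d) ℝ →ₗ[ℝ] ℝ)
    (a2 : Idx d 2 → ℝ) (a1 : Idx d 1 → ℝ) (a0 : ℝ)
    (hv : ∀ p : MvPolynomial (Fin d) ℝ, v p = u (lamPoly a2 a1 a0 * p))
    (P : PolySystem d) (hP : IsOPS u P) (hPmonic : P.IsMonic)
    (Q : PolySystem d) (hQ : IsOPS v Q) (hQmonic : Q.IsMonic)
    (M : (n : ℕ) → Matrix (Idx d (n + 1)) (Idx d n) ℝ)
    (Nmat : (n : ℕ) → Matrix (Idx d (n + 2)) (Idx d n) ℝ)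
    (hconn : ∀ (n : ℕ) (α : Idx d (n + 2)),
      P.vec (n + 2) α = Q.vec (n + 2) α + matVec (M (n + 1)) (Q.vec (n + 1)) α +
        matVec (Nmat n) (Q.vec n) α) (n : ℕ) :
    Nmat n * Hmat v Q n = Hmat u P (n + 2) * (Amat2 a2 n)ᵀ := by
  ext α γ
  rw [Matrix.mul_apply, Matrix.mul_apply]
  have hL : ∑ β, Nmat n α β * Hmat v Q n β γ = v (matVec (Nmat n) (Q.vec n) α * Q.vec n γ) := by
    rw [matVec, Finset.sum_mul, map_sum]
    refine Finset.sum_congr rfl fun β _ => ?_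
    rw [smul_mul_assoc, v.map_smul, smul_eq_mul]
    rfl
  rw [hL]
  have hPdecomp : matVec (Nmat n) (Q.vec n) α
      = P.vec (n + 2) α - Q.vec (n + 2) α - matVec (M (n + 1)) (Q.vec (n + 1)) α := by
    rw [hconn n α]; ring
  rw [hPdecomp, sub_mul, sub_mul, map_sub, map_sub]
  have h1 : v (Q.vec (n + 2) α * Q.vec n γ) = 0 := ops_orth_vec hQ (by omega) γ α
  have h2 : v (matVec (M (n + 1)) (Q.vec (n + 1)) α * Q.vec n γ) = 0 := by
    rw [matVec, Finset.sum_mul, map_sum]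
    apply Finset.sum_eq_zero
    intro β _
    rw [smul_mul_assoc, v.map_smul, ops_orth_vec hQ (by omega) γ β, smul_zero]
  rw [h1, h2, sub_zero, sub_zero, hv]
  have hassoc : lamPoly a2 a1 a0 * (P.vec (n + 2) α * Q.vec n γ)
      = (lamPoly a2 a1 a0 * Q.vec n γ) * P.vec (n + 2) α := by ring
  rw [hassoc]
  have hdec : lamPoly a2 a1 a0 * Q.vec n γ
      = (∑ δ : Idx d (n + 2), Amat2 a2 n γ δ • monIdx δ)
        + (lamPoly a2 a1 a0 * Q.vec n γ - ∑ δ : Idx d (n + 2), Amat2 a2 n γ δ • monIdx δ) := by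
    ring
  rw [hdec, add_mul, map_add]
  have hrem : u ((lamPoly a2 a1 a0 * Q.vec n γ
      - ∑ δ : Idx d (n + 2), Amat2 a2 n γ δ • monIdx δ) * P.vec (n + 2) α) = 0 :=
    orth_low hP (n + 2) α (rem_coeff a2 a1 a0 hQmonic n γ)
  rw [hrem, add_zero, Finset.sum_mul, map_sum]
  refine Finset.sum_congr rfl fun δ _ => ?_
  rw [smul_mul_assoc, u.map_smul, smul_eq_mul, Matrix.transpose_apply]
  rw [mul_comm (monIdx δ) (P.vec (n + 2) α), u_vec_mon hP hPmonic (n + 2) α δ]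
  ring
end Helpers5
section Helpers6
open MvPolynomial

variable {d : ℕ}

lemma lam2_ne_zero {a2 : Idx d 2 → ℝ} (ha2 : a2 ≠ 0) :
    (∑ α : Idx d 2, a2 α • monIdx α) ≠ 0 := by
  obtain ⟨α0, hα0⟩ := Function.ne_iff.mp ha2
  intro hc
  apply hα0
  have := congrArg (MvPolynomial.coeff (idxF α0)) hc
  rw [coeff_sum_monIdx] at this
  simpa using this

lemma Amat_rows_indep (a2 : Idx d 2 → ℝ) (ha2 : a2 ≠ 0) (n : ℕ) :
    LinearIndependent ℝ (fun γ : Idx d n => Amat2 a2 n γ) := by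
  rw [Fintype.linearIndependent_iff]
  intro c hc γ0
  have hzero : ∀ δ : Idx d (n + 2), ∑ γ, c γ * Amat2 a2 n γ δ = 0 := by
    intro δ
    have h := congrFun hc δ
    rw [Finset.sum_apply] at h
    simpa [smul_eq_mul] using h
  have hpoly : (∑ α : Idx d 2, a2 α • monIdx α) * (∑ γ : Idx d n, c γ • monIdx γ) = 0 := by
    rw [Finset.mul_sum]
    calc ∑ γ : Idx d n, (∑ α : Idx d 2, a2 α • monIdx α) * (c γ • monIdx γ)
        = ∑ γ : Idx d n, c γ • ((∑ α : Idx d 2, a2 α • monIdx α) * monIdx γ) :=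
          Finset.sum_congr rfl fun γ _ => by rw [mul_smul_comm]
      _ = ∑ γ : Idx d n, ∑ δ : Idx d (n + 2), c γ • (Amat2 a2 n γ δ • monIdx δ) := by
          refine Finset.sum_congr rfl fun γ _ => ?_
          rw [lam2mul, Finset.smul_sum]
      _ = ∑ δ : Idx d (n + 2), (∑ γ, c γ * Amat2 a2 n γ δ) • monIdx δ := by
          rw [Finset.sum_comm]
          refine Finset.sum_congr rfl fun δ _ => ?_
          rw [Finset.sum_smul]
          exact Finset.sum_congr rfl fun γ _ => by rw [smul_smul]
      _ = 0 := by
          apply Finset.sum_eq_zero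
          intro δ _
          rw [hzero δ, zero_smul]
  have hq : (∑ γ : Idx d n, c γ • monIdx γ) = 0 := by
    rcases mul_eq_zero.mp hpoly with hzx | hzx
    · exact absurd hzx (lam2_ne_zero ha2)
    · exact hzx
  have := congrArg (MvPolynomial.coeff (idxF γ0)) hq
  rw [coeff_sum_monIdx] at this
  simpa using this
end Helpers6

/-- Let `u` and `v = λ(x)u` be quasi-definite, with
`λ(x) = a_2·𝕏_2 + a_1·𝕏_1 + a_0` of exact total degree 2 (`a_2 ≠ 0`), and let the monic
OPS `{ℙ_n}` of `u` and `{ℚ_n}` of `v` be related by `ℙ_n = ℚ_n + M_n ℚ_{n-1} + N_n ℚ_{n-2}`.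
Then `N_n Ĥ_{n-2} = H_n A_{n-2,2}^t` for all `n ≥ 2`, `N_n` has full rank `r_{n-2}^d`,
and `N_2 = H_2 a_2^t Ĥ_0⁻¹`.  (`Nmat n` stands for `N_{n+2}` and `M n` for `M_{n+1}`.) -/
theorem christoffel_Nn_formula
    {d : ℕ} (hd : 1 ≤ d)
    (u v : MvPolynomial (Fin d) ℝ →ₗ[ℝ] ℝ)
    (a2 : Idx d 2 → ℝ) (a1 : Idx d 1 → ℝ) (a0 : ℝ) (ha2 : a2 ≠ 0)
    (hv : ∀ p : MvPolynomial (Fin d) ℝ, v p = u (lamPoly a2 a1 a0 * p))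
    (P : PolySystem d) (hP : IsOPS u P) (hPmonic : P.IsMonic)
    (Q : PolySystem d) (hQ : IsOPS v Q) (hQmonic : Q.IsMonic)
    (M : (n : ℕ) → Matrix (Idx d (n + 1)) (Idx d n) ℝ)
    (Nmat : (n : ℕ) → Matrix (Idx d (n + 2)) (Idx d n) ℝ)
    (hconn1 : ∀ α : Idx d 1, P.vec 1 α = Q.vec 1 α + matVec (M 0) (Q.vec 0) α)
    (hconn : ∀ (n : ℕ) (α : Idx d (n + 2)),
      P.vec (n + 2) α = Q.vec (n + 2) α + matVec (M (n + 1)) (Q.vec (n + 1)) α +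
        matVec (Nmat n) (Q.vec n) α) :
    (∀ n : ℕ, Nmat n * Hmat v Q n = Hmat u P (n + 2) * (Amat2 a2 n)ᵀ) ∧
    (∀ n : ℕ, (Nmat n).rank = Fintype.card (Idx d n)) ∧
    Nmat 0 = Hmat u P 2 * (Matrix.of fun (α : Idx d 2) (_ : Idx d 0) => a2 α) *
      (Hmat v Q 0)⁻¹ := by
  have hpart1 : ∀ n : ℕ, Nmat n * Hmat v Q n = Hmat u P (n + 2) * (Amat2 a2 n)ᵀ :=
    fun n => part1_lemma u v a2 a1 a0 hv P hP hPmonic Q hQ hQmonic M Nmat hconn n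
  have hHQ : ∀ n, IsUnit (Hmat v Q n).det := Hmat_isUnit hQ hQmonic
  have hHP : ∀ n, IsUnit (Hmat u P n).det := Hmat_isUnit hP hPmonic
  have hNform : ∀ n : ℕ, Nmat n = Hmat u P (n + 2) * (Amat2 a2 n)ᵀ * (Hmat v Q n)⁻¹ := by
    intro n
    calc Nmat n = Nmat n * (Hmat v Q n * (Hmat v Q n)⁻¹) := by
          rw [Matrix.mul_nonsing_inv _ (hHQ n), Matrix.mul_one]
      _ = (Nmat n * Hmat v Q n) * (Hmat v Q n)⁻¹ := by rw [Matrix.mul_assoc]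
      _ = Hmat u P (n + 2) * (Amat2 a2 n)ᵀ * (Hmat v Q n)⁻¹ := by rw [hpart1 n]
  refine ⟨hpart1, ?_, ?_⟩
  · intro n
    rw [hNform n, Matrix.mul_assoc,
      Matrix.rank_mul_eq_right_of_isUnit_det _ _ (hHP (n + 2)),
      Matrix.rank_mul_eq_left_of_isUnit_det _ _ (Matrix.isUnit_nonsing_inv_det _ (hHQ n)),
      Matrix.rank_transpose]
    exact (Amat_rows_indep a2 ha2 n).rank_matrix
  · rw [hNform 0]
    have hAT : (Amat2 a2 0)ᵀ = (Matrix.of fun (α : Idx d 2) (_ : Idx d 0) => a2 α) := by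
      ext δ z
      rw [Matrix.transpose_apply, Amat2_apply]
      have hz : ∀ k, z.1 k = 0 := by
        intro k
        have := z.2
        rw [Finset.Nat.mem_antidiagonalTuple] at this
        exact Finset.sum_eq_zero_iff.mp this k (Finset.mem_univ k)
      have haddz : ∀ α : Idx d 2, addIdx z α = α := by
        intro α
        apply Subtype.ext
        funext k
        show z.1 k + α.1 k = α.1 k
        rw [hz k, zero_add]
      have hstep : ∀ i j : Fin d,
          (if i ≤ j ∧ δ = addIdx z (e2 i j) then a2 (e2 i j) else 0)
            = (if i ≤ j then (if e2 i j = δ then a2 (e2 i j) else 0) else 0) := by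
        intro i j
        rw [haddz]
        by_cases hij : i ≤ j
        · by_cases hδ : e2 i j = δ
          · rw [if_pos ⟨hij, hδ.symm⟩, if_pos hij, if_pos hδ]
          · rw [if_neg (fun hc => hδ hc.2.symm), if_pos hij, if_neg hδ]
        · rw [if_neg (fun hc => hij hc.1), if_neg hij]
      have : (∑ i : Fin d, ∑ j : Fin d,
          if i ≤ j ∧ δ = addIdx z (e2 i j) then a2 (e2 i j) else 0)
          = ∑ α : Idx d 2, (if α = δ then a2 α else 0) := by
        rw [show (∑ i : Fin d, ∑ j : Fin d,
            if i ≤ j ∧ δ = addIdx z (e2 i j) then a2 (e2 i j) else 0)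
            = ∑ i : Fin d, ∑ j : Fin d,
              (if i ≤ j then (if e2 i j = δ then a2 (e2 i j) else 0) else 0) from
          Finset.sum_congr rfl fun i _ => Finset.sum_congr rfl fun j _ => hstep i j]
        exact sum_e2' (fun α => if α = δ then a2 α else 0)
      rw [this, Finset.sum_ite_eq' Finset.univ δ a2]
      simp
    rw [hAT]
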